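/- Let M, N ∈ ⋀X be nonzero. Let ⌈M⌉ = max{p : ⟨M⟩_p ≠ 0} and ⌊M⌋ = min{p : ⟨M⟩_p ≠ 0} denote the top and bottom grades, set t = min{⌈M⌉, ⌈N⌉} and b = max{⌊M⌋, ⌊N⌋}. If dim(isp M + isp N) ≥ t + 2, then isp(M+N) = isp M ∩ isp N, and moreover dim isp(M+N) ≤ b − 2. -/

import Mathlib

open scoped RealInnerProductSpace

/-- The blade `v₁ ∧ ⋯ ∧ v_k` in the exterior algebra. -/
noncomputable def expBlade {X : Type*} [AddCommGroup X] [Module ℝ X] {k : ℕ}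
    (v : Fin k → X) : ExteriorAlgebra ℝ X :=
  (List.ofFn fun i => ExteriorAlgebra.ι ℝ (v i)).prod

/-- The inner space of a multivector `M`: the subspace `{v ∈ X : v ∧ M = 0}`. -/
noncomputable def innerSpace {X : Type*} [AddCommGroup X] [Module ℝ X]
    (M : ExteriorAlgebra ℝ X) : Submodule ℝ X :=
  LinearMap.ker ((LinearMap.mulRight ℝ M).comp (ExteriorAlgebra.ι ℝ))

/-- The outer space of a multivector `M`: the intersection of all subspaces `V ⊆ X` such
that `M` lies in the subalgebra of the exterior algebra generated by `V`. -/
noncomputable def outerSpace {X : Type*} [AddCommGroup X] [Module ℝ X]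
    (M : ExteriorAlgebra ℝ X) : Submodule ℝ X :=
  sInf {V : Submodule ℝ X |
    M ∈ Algebra.adjoin ℝ (⇑(ExteriorAlgebra.ι ℝ (M := X)) '' (V : Set X))}

/-- The degree-`i` homogeneous component of a multivector. -/
noncomputable def gradeProj {X : Type*} [AddCommGroup X] [Module ℝ X] (i : ℕ) :
    ExteriorAlgebra ℝ X →ₗ[ℝ] ExteriorAlgebra ℝ X :=
  GradedAlgebra.proj (fun i : ℕ => ⋀[ℝ]^i X) i

/-- The top grade of a nonzero multivector. -/
noncomputable def topGrade {X : Type*} [AddCommGroup X] [Module ℝ X]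
    (M : ExteriorAlgebra ℝ X) : ℕ :=
  sSup {i : ℕ | gradeProj i M ≠ 0}

/-- The bottom grade of a nonzero multivector. -/
noncomputable def botGrade {X : Type*} [AddCommGroup X] [Module ℝ X]
    (M : ExteriorAlgebra ℝ X) : ℕ :=
  sInf {i : ℕ | gradeProj i M ≠ 0}

namespace Stmt16Aux

variable {X : Type*} [AddCommGroup X] [Module ℝ X]

lemma gradeProj_apply (i : ℕ) (M : ExteriorAlgebra ℝ X) :
    gradeProj i M = (DirectSum.decompose (fun i : ℕ => ⋀[ℝ]^i X) M i : ExteriorAlgebra ℝ X) := by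
  rw [gradeProj, GradedAlgebra.proj_apply]

lemma mem_innerSpace_iff (M : ExteriorAlgebra ℝ X) (x : X) :
    x ∈ innerSpace M ↔ ExteriorAlgebra.ι ℝ x * M = 0 := by
  simp [innerSpace, LinearMap.mem_ker]

lemma eq_zero_of_forall_gradeProj (M : ExteriorAlgebra ℝ X)
    (h : ∀ i, gradeProj i M = 0) : M = 0 := by
  classical
  rw [← DirectSum.sum_support_decompose (fun i : ℕ => ⋀[ℝ]^i X) M]
  exact Finset.sum_eq_zero fun i _ => by rw [← gradeProj_apply, h i]

lemma gradeProj_of_mem_ne {j q : ℕ} {x : ExteriorAlgebra ℝ X}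
    (hx : x ∈ ⋀[ℝ]^j X) (h : j ≠ q) : gradeProj q x = 0 := by
  rw [gradeProj_apply, DirectSum.decompose_of_mem_ne (fun i : ℕ => ⋀[ℝ]^i X) hx h]

lemma gradeProj_mul_of_lt {k : ℕ} {a : ExteriorAlgebra ℝ X} (ha : a ∈ ⋀[ℝ]^k X)
    (x : ExteriorAlgebra ℝ X) {q : ℕ} (h : q < k) : gradeProj q (a * x) = 0 := by
  induction x using DirectSum.Decomposition.inductionOn (fun i : ℕ => ⋀[ℝ]^i X) with
  | zero => simp
  | @homogeneous j m =>
      exact gradeProj_of_mem_ne (SetLike.mul_mem_graded ha m.2) (by omega)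
  | add m m' hm hm' => rw [mul_add, map_add, hm, hm', add_zero]

lemma gradeProj_mul_of_high {k T : ℕ} {a : ExteriorAlgebra ℝ X} (ha : a ∈ ⋀[ℝ]^k X)
    {x : ExteriorAlgebra ℝ X} (hx : ∀ j, T < j → gradeProj j x = 0)
    {q : ℕ} (h : T + k < q) : gradeProj q (a * x) = 0 := by
  classical
  conv_lhs => rw [← DirectSum.sum_support_decompose (fun i : ℕ => ⋀[ℝ]^i X) x]
  rw [Finset.mul_sum, map_sum]
  refine Finset.sum_eq_zero fun j _ => ?_
  rcases eq_or_ne (k + j) q with rfl | hne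
  · have hj : T < j := by omega
    have h0 := hx j hj
    rw [gradeProj_apply] at h0
    rw [h0, mul_zero, map_zero]
  · exact gradeProj_of_mem_ne
      (SetLike.mul_mem_graded ha (DirectSum.decompose (fun i : ℕ => ⋀[ℝ]^i X) x j).2) hne

lemma ι_mem_one (x : X) : ExteriorAlgebra.ι ℝ x ∈ ⋀[ℝ]^1 X := by
  show ExteriorAlgebra.ι ℝ x ∈ LinearMap.range (ExteriorAlgebra.ι ℝ (M := X)) ^ 1
  rw [pow_one]
  exact LinearMap.mem_range_self _ _

lemma expBlade_succ {n : ℕ} (v : Fin (n + 1) → X) :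
    expBlade v = ExteriorAlgebra.ι ℝ (v 0) * expBlade (fun i => v i.succ) := by
  simp [expBlade, List.ofFn_succ]

lemma expBlade_mem {k : ℕ} (v : Fin k → X) : expBlade v ∈ ⋀[ℝ]^k X := by
  induction k with
  | zero =>
      simp only [expBlade, List.ofFn_zero, List.prod_nil]
      exact SetLike.one_mem_graded _
  | succ n ih =>
      rw [expBlade_succ]
      have := SetLike.mul_mem_graded (ι_mem_one (v 0)) (ih (fun i => v i.succ))
      rwa [Nat.add_comm 1 n] at this

lemma div_lemma : ∀ {k : ℕ} (v : Fin k → X), LinearIndependent ℝ v →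
    ∀ P : ExteriorAlgebra ℝ X, (∀ i, ExteriorAlgebra.ι ℝ (v i) * P = 0) →
    ∃ Q, P = expBlade v * Q := by
  intro k
  induction k with
  | zero =>
      intro v _ P _
      exact ⟨P, by simp [expBlade]⟩
  | succ n ih =>
      intro v hv P hP
      -- find a dual functional
      set p : Submodule ℝ X := Submodule.span ℝ (Set.range (v ∘ Fin.succ)) with hp
      have hv0 : v 0 ∉ p := by
        have h1 : v 0 ∉ Submodule.span ℝ (v '' {(0 : Fin (n+1))}ᶜ) :=
          hv.notMem_span_image (by simp)
      
        have h2 : Set.range (v ∘ Fin.succ) ⊆ v '' {(0 : Fin (n+1))}ᶜ := by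
          rintro _ ⟨i, rfl⟩
          exact ⟨i.succ, by simp [Fin.succ_ne_zero], rfl⟩
        exact fun hmem => h1 (Submodule.span_mono h2 hmem)
      obtain ⟨f, hf0, hfmap⟩ := p.exists_dual_map_eq_bot_of_notMem hv0 inferInstance
      set g : Module.Dual ℝ X := (f (v 0))⁻¹ • f with hg
      have hg0 : g (v 0) = 1 := by
        simp [hg, inv_mul_cancel₀ hf0]
      have hgi : ∀ i : Fin n, g (v i.succ) = 0 := by
        intro i
        have hmem : v i.succ ∈ p := Submodule.subset_span ⟨i, rfl⟩
        have : f (v i.succ) ∈ p.map f := Submodule.mem_map_of_mem hmem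
        rw [hfmap] at this
        simp only [Submodule.mem_bot] at this
        simp [hg, this]
      set Q1 : ExteriorAlgebra ℝ X := CliffordAlgebra.contractLeft g P with hQ1
      have key : ∀ i : Fin (n+1),
          g (v i) • P - ExteriorAlgebra.ι ℝ (v i) * Q1 = 0 := by
        intro i
        have h := CliffordAlgebra.contractLeft_ι_mul (Q := (0 : QuadraticForm ℝ X))
          (d := g) (v i) P
        rw [hP i, map_zero] at h
        exact h.symm
      have hPeq : P = ExteriorAlgebra.ι ℝ (v 0) * Q1 := by
        have h := key 0
        rw [hg0, one_smul, sub_eq_zero] at h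
        exact h
      have hQi : ∀ i : Fin n, ExteriorAlgebra.ι ℝ ((fun i => v i.succ) i) * Q1 = 0 := by
        intro i
        have h := key i.succ
        rw [hgi i, zero_smul, zero_sub, neg_eq_zero] at h
        exact h
      obtain ⟨Q, hQ⟩ := ih (fun i => v i.succ) (hv.comp Fin.succ (Fin.succ_injective n)) Q1 hQi
      refine ⟨Q, ?_⟩
      rw [hPeq, hQ, expBlade_succ, mul_assoc]

lemma gradeProj_eq_zero_of_lt_of_annihil {k : ℕ} {v : Fin k → X}
    (hv : LinearIndependent ℝ v) {P : ExteriorAlgebra ℝ X}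
    (hP : ∀ i, ExteriorAlgebra.ι ℝ (v i) * P = 0) {q : ℕ} (hq : q < k) :
    gradeProj q P = 0 := by
  obtain ⟨Q, rfl⟩ := div_lemma v hv P hP
  exact gradeProj_mul_of_lt (expBlade_mem v) Q hq

lemma bddAbove_grades (M : ExteriorAlgebra ℝ X) :
    BddAbove {i : ℕ | gradeProj i M ≠ 0} := by
  classical
  apply Set.Finite.bddAbove
  apply Set.Finite.subset (Finset.finite_toSet
    (DirectSum.decompose (fun i : ℕ => ⋀[ℝ]^i X) M).support)
  intro i hi
  simp only [Set.mem_setOf_eq, gradeProj_apply] at hi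
  simp only [Finset.mem_coe, DFinsupp.mem_support_iff]
  intro h0
  rw [h0] at hi
  exact hi rfl

lemma gradeProj_eq_zero_of_topGrade_lt (M : ExteriorAlgebra ℝ X) {j : ℕ}
    (h : topGrade M < j) : gradeProj j M = 0 := by
  by_contra hne
  have h2 : j ≤ topGrade M := le_csSup (bddAbove_grades M) hne
  omega

lemma topGrade_mem {M : ExteriorAlgebra ℝ X} (hM : M ≠ 0) :
    gradeProj (topGrade M) M ≠ 0 := by
  have hne : {i : ℕ | gradeProj i M ≠ 0}.Nonempty := by
    by_contra h
    rw [Set.not_nonempty_iff_eq_empty] at h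
    refine hM (eq_zero_of_forall_gradeProj M fun i => ?_)
    by_contra hi
    exact absurd (Set.mem_setOf_eq ▸ hi : i ∈ {i : ℕ | gradeProj i M ≠ 0}) (h ▸ Set.notMem_empty i)
  exact Nat.sSup_mem hne (bddAbove_grades M)

lemma botGrade_mem {M : ExteriorAlgebra ℝ X} (hM : M ≠ 0) :
    gradeProj (botGrade M) M ≠ 0 := by
  have hne : {i : ℕ | gradeProj i M ≠ 0}.Nonempty := by
    by_contra h
    rw [Set.not_nonempty_iff_eq_empty] at h
    refine hM (eq_zero_of_forall_gradeProj M fun i => ?_)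
    by_contra hi
    exact absurd (Set.mem_setOf_eq ▸ hi : i ∈ {i : ℕ | gradeProj i M ≠ 0}) (h ▸ Set.notMem_empty i)
  exact Nat.sInf_mem hne

lemma botGrade_le_topGrade {M : ExteriorAlgebra ℝ X} (hM : M ≠ 0) :
    botGrade M ≤ topGrade M :=
  Nat.sInf_le (topGrade_mem hM)

end Stmt16Aux

open Stmt16Aux in
/-- finrank of inner space is at most the bottom grade. -/
lemma finrank_innerSpace_le_botGrade {X : Type*} [NormedAddCommGroup X]
    [InnerProductSpace ℝ X] [FiniteDimensional ℝ X]
    {M : ExteriorAlgebra ℝ X} (hM : M ≠ 0) :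
    Module.finrank ℝ ↥(innerSpace M) ≤ botGrade M := by
  set k := Module.finrank ℝ ↥(innerSpace M) with hk
  let b := Module.finBasis ℝ ↥(innerSpace M)
  let u : Fin k → X := fun i => (b i : X)
  have hu : LinearIndependent ℝ u :=
    b.linearIndependent.map' (innerSpace M).subtype (Submodule.ker_subtype _)
  have hann : ∀ i, ExteriorAlgebra.ι ℝ (u i) * M = 0 := fun i =>
    (mem_innerSpace_iff M (u i)).mp (b i).2
  by_contra h
  push_neg at h
  exact botGrade_mem hM (gradeProj_eq_zero_of_lt_of_annihil hu hann h)

/-- if `dim(isp M + isp N) ≥ min(⌈M⌉,⌈N⌉) + 2` then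
`isp(M+N) = isp M ∩ isp N` and `dim isp(M+N) ≤ max(⌊M⌋,⌊N⌋) − 2`. -/
theorem stmt16 {X : Type*} [NormedAddCommGroup X] [InnerProductSpace ℝ X]
    [FiniteDimensional ℝ X]
    (M N : ExteriorAlgebra ℝ X) (hM : M ≠ 0) (hN : N ≠ 0)
    (t b : ℕ) (ht : t = min (topGrade M) (topGrade N))
    (hb : b = max (botGrade M) (botGrade N))
    (hdim : t + 2 ≤ Module.finrank ℝ ↥(innerSpace M ⊔ innerSpace N)) :
    innerSpace (M + N) = innerSpace M ⊓ innerSpace N ∧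
    (Module.finrank ℝ ↥(innerSpace (M + N)) : ℤ) ≤ (b : ℤ) - 2 := by
  open Stmt16Aux in
  have main : innerSpace (M + N) = innerSpace M ⊓ innerSpace N := by
    apply le_antisymm
    · intro v hv
      rw [Stmt16Aux.mem_innerSpace_iff, mul_add] at hv
      -- P := ι v * M
      set P : ExteriorAlgebra ℝ X := ExteriorAlgebra.ι ℝ v * M with hPdef
      have hPN : ExteriorAlgebra.ι ℝ v * N = -P :=
        eq_neg_of_add_eq_zero_right hv
      have hP0 : P = 0 := by
        by_contra hP
        -- innerSpace M ⊔ innerSpace N ≤ innerSpace P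
        have hWle : innerSpace M ⊔ innerSpace N ≤ innerSpace P := by
          apply sup_le
          · intro w hw
            rw [Stmt16Aux.mem_innerSpace_iff] at hw ⊢
            have hswap := ExteriorAlgebra.ι_add_mul_swap (R := ℝ) w v
            rw [hPdef, ← mul_assoc]
            have h2 : ExteriorAlgebra.ι ℝ w * ExteriorAlgebra.ι ℝ v
                = -(ExteriorAlgebra.ι ℝ v * ExteriorAlgebra.ι ℝ w) :=
              eq_neg_of_add_eq_zero_left hswap
            rw [h2, neg_mul, mul_assoc, hw, mul_zero, neg_zero]
          · intro w hw
            rw [Stmt16Aux.mem_innerSpace_iff] at hw ⊢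
            have h3 : ExteriorAlgebra.ι ℝ w * P
                = -(ExteriorAlgebra.ι ℝ w * (ExteriorAlgebra.ι ℝ v * N)) := by
              rw [hPN, mul_neg, neg_neg]
            rw [h3, ← mul_assoc]
            have hswap := ExteriorAlgebra.ι_add_mul_swap (R := ℝ) w v
            have h2 : ExteriorAlgebra.ι ℝ w * ExteriorAlgebra.ι ℝ v
                = -(ExteriorAlgebra.ι ℝ v * ExteriorAlgebra.ι ℝ w) :=
              eq_neg_of_add_eq_zero_left hswap
            rw [h2, neg_mul, mul_assoc, hw, mul_zero, neg_zero, neg_zero]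
        set n := Module.finrank ℝ ↥(innerSpace M ⊔ innerSpace N) with hn
        let bb := Module.finBasis ℝ ↥(innerSpace M ⊔ innerSpace N)
        let u : Fin n → X := fun i => (bb i : X)
        have hu : LinearIndependent ℝ u :=
          bb.linearIndependent.map' (innerSpace M ⊔ innerSpace N).subtype
            (Submodule.ker_subtype _)
        have hann : ∀ i, ExteriorAlgebra.ι ℝ (u i) * P = 0 := fun i =>
          (Stmt16Aux.mem_innerSpace_iff P (u i)).mp (hWle (bb i).2)
        have hι1 : ExteriorAlgebra.ι ℝ v ∈ ⋀[ℝ]^1 X := Stmt16Aux.ι_mem_one v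
        have hall : ∀ q, gradeProj q P = 0 := by
          intro q
          by_cases hq : q < n
          · exact Stmt16Aux.gradeProj_eq_zero_of_lt_of_annihil hu hann hq
          · push_neg at hq
            have hq' : t + 2 ≤ q := le_trans hdim hq
            rcases le_total (topGrade M) (topGrade N) with hMN | hMN
            · have htM : t = topGrade M := by omega
              rw [hPdef]
              exact Stmt16Aux.gradeProj_mul_of_high hι1
                (fun j hj => Stmt16Aux.gradeProj_eq_zero_of_topGrade_lt M hj)
                (by omega)
            · have htN : t = topGrade N := by omega
              have h4 : P = -(ExteriorAlgebra.ι ℝ v * N) := by rw [hPN, neg_neg]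
              rw [h4, map_neg, neg_eq_zero]
              exact Stmt16Aux.gradeProj_mul_of_high hι1
                (fun j hj => Stmt16Aux.gradeProj_eq_zero_of_topGrade_lt N hj)
                (by omega)
        exact hP (Stmt16Aux.eq_zero_of_forall_gradeProj P hall)
      constructor
      · rw [SetLike.mem_coe, Stmt16Aux.mem_innerSpace_iff]; exact hP0
      · rw [SetLike.mem_coe, Stmt16Aux.mem_innerSpace_iff]
        rw [hPN, hP0, neg_zero]
    · intro v hv
      obtain ⟨h1, h2⟩ := hv
      rw [SetLike.mem_coe, Stmt16Aux.mem_innerSpace_iff] at h1 h2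
      rw [Stmt16Aux.mem_innerSpace_iff, mul_add, h1, h2, add_zero]
  refine ⟨main, ?_⟩
  have hMle := finrank_innerSpace_le_botGrade hM
  have hNle := finrank_innerSpace_le_botGrade hN
  have heq := Submodule.finrank_sup_add_finrank_inf_eq (innerSpace M) (innerSpace N)
  have hbM := Stmt16Aux.botGrade_le_topGrade hM
  have hbN := Stmt16Aux.botGrade_le_topGrade hN
  rw [main]
  omega
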